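/- Let (f, 𝔣) and (g, 𝔤) be nonzero pseudo-polynomials over a Dedekind domain R such that LM(f) and LM(g) are coprime monomials and the ideals 𝔣·LC(f) and 𝔤·LC(g) are coprime integral ideals of R. Then the S-polynomial spoly((f,𝔣),(g,𝔤)) reduces to 0 modulo {(f,𝔣),(g,𝔤)}. -/

import Mathlib

open MvPolynomial

noncomputable def mdeg {σ : Type*} (m : MonomialOrder σ) {K : Type*} [CommSemiring K]
    (f : MvPolynomial σ K) : σ →₀ ℕ :=
  m.toSyn.symm (f.support.sup fun d => m.toSyn d)

noncomputable def plc {σ : Type*} (m : MonomialOrder σ) {K : Type*} [CommSemiring K]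
    (f : MvPolynomial σ K) : K :=
  f.coeff (mdeg m f)

section Aux

variable {σ : Type*} [DecidableEq σ] (m : MonomialOrder σ) {K : Type*} [Field K]

lemma plc_def (f : MvPolynomial σ K) : plc m f = f.coeff (mdeg m f) := rfl

lemma mdeg_mem_support {f : MvPolynomial σ K} (hf : f ≠ 0) : mdeg m f ∈ f.support := by
  obtain ⟨d, hd, hds⟩ := Finset.exists_mem_eq_sup f.support
    (MvPolynomial.support_nonempty.mpr hf) (fun d => m.toSyn d)
  have : mdeg m f = d := by rw [mdeg, hds, AddEquiv.symm_apply_apply]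
  rwa [this]

lemma plc_ne_zero {f : MvPolynomial σ K} (hf : f ≠ 0) : plc m f ≠ 0 :=
  MvPolynomial.mem_support_iff.mp (mdeg_mem_support m hf)

lemma le_mdeg {f : MvPolynomial σ K} {d : σ →₀ ℕ} (hd : f.coeff d ≠ 0) :
    m.toSyn d ≤ m.toSyn (mdeg m f) := by
  rw [mdeg, AddEquiv.apply_symm_apply]
  exact Finset.le_sup (MvPolynomial.mem_support_iff.mpr hd)

lemma mdeg_eq_of {f : MvPolynomial σ K} {T : σ →₀ ℕ}
    (h1 : f.coeff T ≠ 0) (h2 : ∀ d, f.coeff d ≠ 0 → m.toSyn d ≤ m.toSyn T) :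
    mdeg m f = T := by
  have hs : f.support.sup (fun d => m.toSyn d) = m.toSyn T := by
    apply le_antisymm
    · exact Finset.sup_le fun d hd => h2 d (MvPolynomial.mem_support_iff.mp hd)
    · exact Finset.le_sup (MvPolynomial.mem_support_iff.mpr h1)
  rw [mdeg, hs, AddEquiv.symm_apply_apply]

lemma coeff_mul_le {p q : MvPolynomial σ K} {e : σ →₀ ℕ} (he : (p * q).coeff e ≠ 0) :
    m.toSyn e ≤ m.toSyn (mdeg m p) + m.toSyn (mdeg m q) := by
  rw [MvPolynomial.coeff_mul] at he
  obtain ⟨x, hx, hne⟩ := Finset.exists_ne_zero_of_sum_ne_zero he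
  have hxe : x.1 + x.2 = e := Finset.HasAntidiagonal.mem_antidiagonal.mp hx
  rw [← hxe, map_add]
  exact add_le_add (le_mdeg m (left_ne_zero_of_mul hne)) (le_mdeg m (right_ne_zero_of_mul hne))

lemma coeff_mul_top {p q : MvPolynomial σ K} (hp : p ≠ 0) (hq : q ≠ 0) :
    (p * q).coeff (mdeg m p + mdeg m q) = plc m p * plc m q := by
  rw [MvPolynomial.coeff_mul]
  rw [Finset.sum_eq_single_of_mem (mdeg m p, mdeg m q) (Finset.HasAntidiagonal.mem_antidiagonal.mpr rfl)]
  · rfl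
  · rintro ⟨c, d⟩ hcd hne
    have hsum : c + d = mdeg m p + mdeg m q := Finset.HasAntidiagonal.mem_antidiagonal.mp hcd
    by_contra h
    have h1 : m.toSyn c ≤ m.toSyn (mdeg m p) := le_mdeg m (left_ne_zero_of_mul h)
    have h2 : m.toSyn d ≤ m.toSyn (mdeg m q) := le_mdeg m (right_ne_zero_of_mul h)
    have heq : m.toSyn c + m.toSyn d = m.toSyn (mdeg m p) + m.toSyn (mdeg m q) := by
      rw [← map_add, ← map_add, hsum]
    have hc' : m.toSyn c = m.toSyn (mdeg m p) := by
      by_contra hlt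
      exact absurd heq (ne_of_lt (add_lt_add_of_lt_of_le (lt_of_le_of_ne h1 hlt) h2))
    have hd' : m.toSyn d = m.toSyn (mdeg m q) := by
      rw [hc'] at heq
      exact add_left_cancel heq
    exact hne (Prod.ext (m.toSyn.injective hc') (m.toSyn.injective hd'))

end Aux

/-- One step reduction of `(f, 𝔣)` to `(h, 𝔣)` with respect to the family of
pseudo-polynomials `(gᵢ, 𝔤ᵢ)`: there are `aᵢ ∈ 𝔤ᵢ 𝔣⁻¹`, supported on the set
`J = {i : LM(gᵢ) ∣ LM(f)}`, with `LC(f) = ∑ aᵢ LC(gᵢ)` and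
`h = f - ∑ aᵢ x^{deg f - deg gᵢ} gᵢ`. -/
def OneStep {R : Type*} [CommRing R] [IsDomain R] [IsDedekindDomain R] {n l : ℕ}
    (m : MonomialOrder (Fin n))
    (g : Fin l → MvPolynomial (Fin n) (FractionRing R))
    (𝔤 : Fin l → FractionalIdeal (nonZeroDivisors R) (FractionRing R))
    (𝔣 : FractionalIdeal (nonZeroDivisors R) (FractionRing R))
    (f h : MvPolynomial (Fin n) (FractionRing R)) : Prop :=
  ∃ a : Fin l → FractionRing R,
    (∀ i, a i ∈ 𝔤 i * 𝔣⁻¹) ∧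
    (∀ i, a i ≠ 0 → ∃ γ, mdeg m f = mdeg m (g i) + γ) ∧
    plc m f = ∑ i, a i * plc m (g i) ∧
    h = f - ∑ i, (monomial (mdeg m f - mdeg m (g i)) (a i)) * g i

lemma FIzero_mem {R K : Type*} [CommRing R] [CommRing K] [Algebra R K] {S : Submonoid R}
    (I : FractionalIdeal S K) : (0 : K) ∈ I :=
  FractionalIdeal.mem_coe.mp (Submodule.zero_mem _)

lemma FIsub_mem {R K : Type*} [CommRing R] [CommRing K] [Algebra R K] {S : Submonoid R}
    {I : FractionalIdeal S K} {x y : K} (hx : x ∈ I) (hy : y ∈ I) : x - y ∈ I :=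
  FractionalIdeal.mem_coe.mp (Submodule.sub_mem _ (FractionalIdeal.mem_coe.mpr hx)
    (FractionalIdeal.mem_coe.mpr hy))

section Key

variable {R : Type*} [CommRing R] [IsDomain R] [IsDedekindDomain R] {n : ℕ}
    (m : MonomialOrder (Fin n))

lemma key (f g : MvPolynomial (Fin n) (FractionRing R))
    (𝔣 𝔤 𝔰 : FractionalIdeal (nonZeroDivisors R) (FractionRing R))
    (hf : f ≠ 0) (hg : g ≠ 0)
    (hsep : ∀ du dv : Fin n →₀ ℕ, m.toSyn du < m.toSyn (mdeg m g) →
      m.toSyn dv < m.toSyn (mdeg m f) → du + mdeg m f ≠ dv + mdeg m g)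
    (N : ℕ) :
    ∀ U V : MvPolynomial (Fin n) (FractionRing R),
      U.support.card + V.support.card ≤ N →
      (∀ d, U.coeff d ∈ 𝔣 * 𝔰⁻¹) → (∀ d, V.coeff d ∈ 𝔤 * 𝔰⁻¹) →
      (∀ d ∈ U.support, m.toSyn d < m.toSyn (mdeg m g)) →
      (∀ d ∈ V.support, m.toSyn d < m.toSyn (mdeg m f)) →
      Relation.ReflTransGen (OneStep m ![f, g] ![𝔣, 𝔤] 𝔰) (U * f + V * g) 0 := by
  induction N with
  | zero =>
    intro U V hcard _ _ _ _
    have hU : U = 0 := by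
      rw [← MvPolynomial.support_eq_empty, ← Finset.card_eq_zero]; omega
    have hV : V = 0 := by
      rw [← MvPolynomial.support_eq_empty, ← Finset.card_eq_zero]; omega
    rw [hU, hV]
    simpa using Relation.ReflTransGen.refl
  | succ N ih =>
    -- case : reduce by f
    have caseU : ∀ U V : MvPolynomial (Fin n) (FractionRing R),
        U.support.card + V.support.card ≤ N + 1 →
        (∀ d, U.coeff d ∈ 𝔣 * 𝔰⁻¹) → (∀ d, V.coeff d ∈ 𝔤 * 𝔰⁻¹) →
        (∀ d ∈ U.support, m.toSyn d < m.toSyn (mdeg m g)) →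
        (∀ d ∈ V.support, m.toSyn d < m.toSyn (mdeg m f)) →
        U ≠ 0 →
        (∀ e, (V * g).coeff e ≠ 0 → m.toSyn e < m.toSyn (mdeg m U + mdeg m f)) →
        Relation.ReflTransGen (OneStep m ![f, g] ![𝔣, 𝔤] 𝔰) (U * f + V * g) 0 := by
      intro U V hcard hUc hVc hUd hVd hU0 hVlt
      have hT : (U * f + V * g).coeff (mdeg m U + mdeg m f) = plc m U * plc m f := by
        rw [MvPolynomial.coeff_add, coeff_mul_top m hU0 hf]
        have hz : (V * g).coeff (mdeg m U + mdeg m f) = 0 := by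
          by_contra hc; exact absurd (hVlt _ hc) (lt_irrefl _)
        rw [hz, add_zero]
      have hTne : (U * f + V * g).coeff (mdeg m U + mdeg m f) ≠ 0 :=
        hT ▸ mul_ne_zero (plc_ne_zero m hU0) (plc_ne_zero m hf)
      have hmdeg : mdeg m (U * f + V * g) = mdeg m U + mdeg m f := by
        apply mdeg_eq_of m hTne
        intro d hd
        rw [MvPolynomial.coeff_add] at hd
        have : (U * f).coeff d ≠ 0 ∨ (V * g).coeff d ≠ 0 := by
          by_contra hcon
          push_neg at hcon
          rw [hcon.1, hcon.2, add_zero] at hd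
          exact hd rfl
        rcases this with h1 | h1
        · have := coeff_mul_le m h1
          rwa [map_add]
        · exact le_of_lt (hVlt d h1)
      have hplc : plc m (U * f + V * g) = plc m U * plc m f := by
        rw [plc_def, hmdeg, hT]
      have hstep : OneStep m ![f, g] ![𝔣, 𝔤] 𝔰 (U * f + V * g)
          ((U - MvPolynomial.monomial (mdeg m U) (plc m U)) * f + V * g) := by
        refine ⟨![plc m U, 0], ?_, ?_, ?_, ?_⟩
        · intro i; fin_cases i
          · simpa [plc_def] using hUc (mdeg m U)
          · simpa using FIzero_mem (𝔤 * 𝔰⁻¹)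
        · intro i; fin_cases i
          · intro _
            refine ⟨mdeg m U, ?_⟩
            rw [hmdeg]
            exact add_comm _ _
          · intro habs; simp at habs
        · rw [Fin.sum_univ_two]
          simp only [Matrix.cons_val_zero, Matrix.cons_val_one, Matrix.head_cons]
          rw [hplc]; ring
        · rw [Fin.sum_univ_two]
          simp only [Matrix.cons_val_zero, Matrix.cons_val_one, Matrix.head_cons,
            MvPolynomial.monomial_zero, zero_mul, add_zero]
          rw [hmdeg, add_tsub_cancel_right]
          ring
      have hU'c : ∀ d, (U - MvPolynomial.monomial (mdeg m U) (plc m U)).coeff d ∈ 𝔣 * 𝔰⁻¹ := by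
        intro d
        rw [MvPolynomial.coeff_sub, MvPolynomial.coeff_monomial]
        by_cases hd : mdeg m U = d
        · rw [if_pos hd, plc_def, hd, sub_self]; exact FIzero_mem _
        · rw [if_neg hd, sub_zero]; exact hUc d
      have hU's : (U - MvPolynomial.monomial (mdeg m U) (plc m U)).support ⊆
          U.support.erase (mdeg m U) := by
        intro d hd
        rw [MvPolynomial.mem_support_iff, MvPolynomial.coeff_sub,
          MvPolynomial.coeff_monomial] at hd
        rw [Finset.mem_erase]
        by_cases hdm : mdeg m U = d
        · exfalso; apply hd; rw [if_pos hdm, plc_def, hdm, sub_self]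
        · rw [if_neg hdm, sub_zero] at hd
          exact ⟨Ne.symm hdm, MvPolynomial.mem_support_iff.mpr hd⟩
      have hcard' : (U - MvPolynomial.monomial (mdeg m U) (plc m U)).support.card
          + V.support.card ≤ N := by
        have h1 := Finset.card_le_card hU's
        rw [Finset.card_erase_of_mem (mdeg_mem_support m hU0)] at h1
        have h2 : 1 ≤ U.support.card :=
          Finset.card_pos.mpr (MvPolynomial.support_nonempty.mpr hU0)
        omega
      exact Relation.ReflTransGen.head hstep
        (ih _ V hcard' hU'c hVc
          (fun d hd => hUd d (Finset.mem_of_mem_erase (hU's hd))) hVd)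
    -- case : reduce by g
    have caseV : ∀ U V : MvPolynomial (Fin n) (FractionRing R),
        U.support.card + V.support.card ≤ N + 1 →
        (∀ d, U.coeff d ∈ 𝔣 * 𝔰⁻¹) → (∀ d, V.coeff d ∈ 𝔤 * 𝔰⁻¹) →
        (∀ d ∈ U.support, m.toSyn d < m.toSyn (mdeg m g)) →
        (∀ d ∈ V.support, m.toSyn d < m.toSyn (mdeg m f)) →
        V ≠ 0 →
        (∀ e, (U * f).coeff e ≠ 0 → m.toSyn e < m.toSyn (mdeg m V + mdeg m g)) →
        Relation.ReflTransGen (OneStep m ![f, g] ![𝔣, 𝔤] 𝔰) (U * f + V * g) 0 := by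
      intro U V hcard hUc hVc hUd hVd hV0 hUlt
      have hT : (U * f + V * g).coeff (mdeg m V + mdeg m g) = plc m V * plc m g := by
        rw [MvPolynomial.coeff_add, coeff_mul_top m hV0 hg]
        have hz : (U * f).coeff (mdeg m V + mdeg m g) = 0 := by
          by_contra hc; exact absurd (hUlt _ hc) (lt_irrefl _)
        rw [hz, zero_add]
      have hTne : (U * f + V * g).coeff (mdeg m V + mdeg m g) ≠ 0 :=
        hT ▸ mul_ne_zero (plc_ne_zero m hV0) (plc_ne_zero m hg)
      have hmdeg : mdeg m (U * f + V * g) = mdeg m V + mdeg m g := by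
        apply mdeg_eq_of m hTne
        intro d hd
        rw [MvPolynomial.coeff_add] at hd
        have : (U * f).coeff d ≠ 0 ∨ (V * g).coeff d ≠ 0 := by
          by_contra hcon
          push_neg at hcon
          rw [hcon.1, hcon.2, add_zero] at hd
          exact hd rfl
        rcases this with h1 | h1
        · exact le_of_lt (hUlt d h1)
        · have := coeff_mul_le m h1
          rwa [map_add]
      have hplc : plc m (U * f + V * g) = plc m V * plc m g := by
        rw [plc_def, hmdeg, hT]
      have hstep : OneStep m ![f, g] ![𝔣, 𝔤] 𝔰 (U * f + V * g)
          (U * f + (V - MvPolynomial.monomial (mdeg m V) (plc m V)) * g) := by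
        refine ⟨![0, plc m V], ?_, ?_, ?_, ?_⟩
        · intro i; fin_cases i
          · simpa using FIzero_mem (𝔣 * 𝔰⁻¹)
          · simpa [plc_def] using hVc (mdeg m V)
        · intro i; fin_cases i
          · intro habs; simp at habs
          · intro _
            refine ⟨mdeg m V, ?_⟩
            rw [hmdeg]
            exact add_comm _ _
        · rw [Fin.sum_univ_two]
          simp only [Matrix.cons_val_zero, Matrix.cons_val_one, Matrix.head_cons]
          rw [hplc]; ring
        · rw [Fin.sum_univ_two]
          simp only [Matrix.cons_val_zero, Matrix.cons_val_one, Matrix.head_cons,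
            MvPolynomial.monomial_zero, zero_mul, zero_add]
          rw [hmdeg, add_tsub_cancel_right]
          ring
      have hV'c : ∀ d, (V - MvPolynomial.monomial (mdeg m V) (plc m V)).coeff d ∈ 𝔤 * 𝔰⁻¹ := by
        intro d
        rw [MvPolynomial.coeff_sub, MvPolynomial.coeff_monomial]
        by_cases hd : mdeg m V = d
        · rw [if_pos hd, plc_def, hd, sub_self]; exact FIzero_mem _
        · rw [if_neg hd, sub_zero]; exact hVc d
      have hV's : (V - MvPolynomial.monomial (mdeg m V) (plc m V)).support ⊆
          V.support.erase (mdeg m V) := by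
        intro d hd
        rw [MvPolynomial.mem_support_iff, MvPolynomial.coeff_sub,
          MvPolynomial.coeff_monomial] at hd
        rw [Finset.mem_erase]
        by_cases hdm : mdeg m V = d
        · exfalso; apply hd; rw [if_pos hdm, plc_def, hdm, sub_self]
        · rw [if_neg hdm, sub_zero] at hd
          exact ⟨Ne.symm hdm, MvPolynomial.mem_support_iff.mpr hd⟩
      have hcard' : U.support.card
          + (V - MvPolynomial.monomial (mdeg m V) (plc m V)).support.card ≤ N := by
        have h1 := Finset.card_le_card hV's
        rw [Finset.card_erase_of_mem (mdeg_mem_support m hV0)] at h1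
        have h2 : 1 ≤ V.support.card :=
          Finset.card_pos.mpr (MvPolynomial.support_nonempty.mpr hV0)
        omega
      exact Relation.ReflTransGen.head hstep
        (ih U _ hcard' hUc hV'c hUd
          (fun d hd => hVd d (Finset.mem_of_mem_erase (hV's hd))))
    intro U V hcard hUc hVc hUd hVd
    by_cases hU0 : U = 0
    · by_cases hV0 : V = 0
      · rw [hU0, hV0]; simpa using Relation.ReflTransGen.refl
      · refine caseV U V hcard hUc hVc hUd hVd hV0 ?_
        intro e he
        rw [hU0, zero_mul] at he
        exact absurd rfl he
    · by_cases hV0 : V = 0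
      · refine caseU U V hcard hUc hVc hUd hVd hU0 ?_
        intro e he
        rw [hV0, zero_mul] at he
        exact absurd rfl he
      · rcases lt_trichotomy (m.toSyn (mdeg m U + mdeg m f))
          (m.toSyn (mdeg m V + mdeg m g)) with hlt | heq | hgt
        · refine caseV U V hcard hUc hVc hUd hVd hV0 ?_
          intro e he
          calc m.toSyn e ≤ m.toSyn (mdeg m U) + m.toSyn (mdeg m f) := coeff_mul_le m he
            _ = m.toSyn (mdeg m U + mdeg m f) := (map_add _ _ _).symm
            _ < _ := hlt
        · exact absurd (m.toSyn.injective heq)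
            (hsep (mdeg m U) (mdeg m V) (hUd _ (mdeg_mem_support m hU0))
              (hVd _ (mdeg_mem_support m hV0)))
        · refine caseU U V hcard hUc hVc hUd hVd hU0 ?_
          intro e he
          calc m.toSyn e ≤ m.toSyn (mdeg m V) + m.toSyn (mdeg m g) := coeff_mul_le m he
            _ = m.toSyn (mdeg m V + mdeg m g) := (map_add _ _ _).symm
            _ < _ := hgt

end Key

/-- product criterion: Let `(f, 𝔣)` and `(g, 𝔤)` be nonzero
pseudo-polynomials over a Dedekind domain `R` such that `LM(f)` and `LM(g)` are
coprime monomials (`gcd = 1`) and `𝔣·LC(f)`, `𝔤·LC(g)` are coprime integral ideals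
of `R`. Then `spoly((f,𝔣),(g,𝔤))` reduces to `0` modulo `{(f,𝔣),(g,𝔤)}`. -/
theorem stmt18 {R : Type*} [CommRing R] [IsDomain R] [IsDedekindDomain R] {n : ℕ}
    (m : MonomialOrder (Fin n))
    (f g : MvPolynomial (Fin n) (FractionRing R))
    (𝔣 𝔤 : FractionalIdeal (nonZeroDivisors R) (FractionRing R))
    (hf : f ≠ 0) (hg : g ≠ 0) (h𝔣 : 𝔣 ≠ 0) (h𝔤 : 𝔤 ≠ 0)
    (hpf : ∀ c ∈ 𝔣, ∀ d, c * f.coeff d ∈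
      (1 : FractionalIdeal (nonZeroDivisors R) (FractionRing R)))
    (hpg : ∀ c ∈ 𝔤, ∀ d, c * g.coeff d ∈
      (1 : FractionalIdeal (nonZeroDivisors R) (FractionRing R)))
    (hlmcop : mdeg m f ⊓ mdeg m g = 0)
    (hlccop : 𝔣 * FractionalIdeal.spanSingleton (nonZeroDivisors R) (plc m f) +
        𝔤 * FractionalIdeal.spanSingleton (nonZeroDivisors R) (plc m g) = 1) :
    Relation.ReflTransGen (OneStep m ![f, g] ![𝔣, 𝔤]
        (𝔣 * FractionalIdeal.spanSingleton (nonZeroDivisors R) (plc m f) ⊓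
          𝔤 * FractionalIdeal.spanSingleton (nonZeroDivisors R) (plc m g)))
      (monomial (mdeg m f ⊔ mdeg m g - mdeg m f) (plc m f)⁻¹ * f -
        monomial (mdeg m f ⊔ mdeg m g - mdeg m g) (plc m g)⁻¹ * g)
      0 := by
  have ha : plc m f ≠ 0 := plc_ne_zero m hf
  have hb : plc m g ≠ 0 := plc_ne_zero m hg
  set I := 𝔣 * FractionalIdeal.spanSingleton (nonZeroDivisors R) (plc m f) with hIdef
  set J := 𝔤 * FractionalIdeal.spanSingleton (nonZeroDivisors R) (plc m g) with hJdef
  have hI0 : I ≠ 0 := mul_ne_zero h𝔣 (FractionalIdeal.spanSingleton_ne_zero_iff.mpr ha)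
  have hJ0 : J ≠ 0 := mul_ne_zero h𝔤 (FractionalIdeal.spanSingleton_ne_zero_iff.mpr hb)
  have hIle : I ≤ 1 := by
    rw [hIdef, FractionalIdeal.mul_le]
    intro i hi j hj
    obtain ⟨z, hz⟩ := (FractionalIdeal.mem_spanSingleton _).mp hj
    obtain ⟨r, hr⟩ := (FractionalIdeal.mem_one_iff _).mp (hpf i hi (mdeg m f))
    refine (FractionalIdeal.mem_one_iff _).mpr ⟨z * r, ?_⟩
    rw [map_mul, hr, ← hz, Algebra.smul_def, plc_def]
    ring
  have hJle : J ≤ 1 := by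
    rw [hJdef, FractionalIdeal.mul_le]
    intro i hi j hj
    obtain ⟨z, hz⟩ := (FractionalIdeal.mem_spanSingleton _).mp hj
    obtain ⟨r, hr⟩ := (FractionalIdeal.mem_one_iff _).mp (hpg i hi (mdeg m g))
    refine (FractionalIdeal.mem_one_iff _).mpr ⟨z * r, ?_⟩
    rw [map_mul, hr, ← hz, Algebra.smul_def, plc_def]
    ring
  have hIJmul : I ⊓ J = I * J := by
    apply le_antisymm
    · calc I ⊓ J = (I ⊓ J) * (I + J) := by rw [hlccop, mul_one]
        _ = (I ⊓ J) * I + (I ⊓ J) * J := by rw [mul_add]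
        _ ≤ J * I + I * J := by
            rw [← FractionalIdeal.sup_eq_add, ← FractionalIdeal.sup_eq_add]
            exact sup_le_sup (mul_left_mono (a := I) inf_le_right)
              (mul_left_mono (a := J) inf_le_left)
        _ = I * J := by rw [mul_comm J I, ← FractionalIdeal.sup_eq_add, sup_idem]
    · refine le_inf ?_ ?_
      · calc I * J ≤ I * 1 := mul_right_mono (a := I) hJle
          _ = I := mul_one I
      · calc I * J ≤ 1 * J := mul_left_mono (a := J) hIle
          _ = J := one_mul J
  have hginv : ∀ d, g.coeff d ∈ 𝔤⁻¹ := by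
    intro d
    rw [FractionalIdeal.mem_inv_iff h𝔤]
    intro y hy
    rw [mul_comm]
    exact hpg y hy d
  have hfinv : ∀ d, f.coeff d ∈ 𝔣⁻¹ := by
    intro d
    rw [FractionalIdeal.mem_inv_iff h𝔣]
    intro y hy
    rw [mul_comm]
    exact hpf y hy d
  have hfs : 𝔣 * (I ⊓ J)⁻¹ =
      FractionalIdeal.spanSingleton (nonZeroDivisors R) (plc m f)⁻¹ *
      (FractionalIdeal.spanSingleton (nonZeroDivisors R) (plc m g)⁻¹ * 𝔤⁻¹) := by
    rw [hIJmul, mul_inv, hIdef, hJdef, mul_inv, mul_inv,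
      FractionalIdeal.spanSingleton_inv, FractionalIdeal.spanSingleton_inv]
    calc 𝔣 * (𝔣⁻¹ * FractionalIdeal.spanSingleton (nonZeroDivisors R) (plc m f)⁻¹ *
        (𝔤⁻¹ * FractionalIdeal.spanSingleton (nonZeroDivisors R) (plc m g)⁻¹)) =
        (𝔣 * 𝔣⁻¹) * (FractionalIdeal.spanSingleton (nonZeroDivisors R) (plc m f)⁻¹ *
          (FractionalIdeal.spanSingleton (nonZeroDivisors R) (plc m g)⁻¹ * 𝔤⁻¹)) := by ring
      _ = _ := by rw [mul_inv_cancel₀ h𝔣, one_mul]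
  have hgs : 𝔤 * (I ⊓ J)⁻¹ =
      FractionalIdeal.spanSingleton (nonZeroDivisors R) (plc m f)⁻¹ *
      (FractionalIdeal.spanSingleton (nonZeroDivisors R) (plc m g)⁻¹ * 𝔣⁻¹) := by
    rw [hIJmul, mul_inv, hIdef, hJdef, mul_inv, mul_inv,
      FractionalIdeal.spanSingleton_inv, FractionalIdeal.spanSingleton_inv]
    calc 𝔤 * (𝔣⁻¹ * FractionalIdeal.spanSingleton (nonZeroDivisors R) (plc m f)⁻¹ *
        (𝔤⁻¹ * FractionalIdeal.spanSingleton (nonZeroDivisors R) (plc m g)⁻¹)) =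
        (𝔤 * 𝔤⁻¹) * (FractionalIdeal.spanSingleton (nonZeroDivisors R) (plc m f)⁻¹ *
          (FractionalIdeal.spanSingleton (nonZeroDivisors R) (plc m g)⁻¹ * 𝔣⁻¹)) := by ring
      _ = _ := by rw [mul_inv_cancel₀ h𝔤, one_mul]
  have hmemU : ∀ z, z ∈ 𝔤⁻¹ →
      (plc m f)⁻¹ * ((plc m g)⁻¹ * z) ∈ 𝔣 * (I ⊓ J)⁻¹ := by
    intro z hz
    rw [hfs]
    exact FractionalIdeal.mul_mem_mul (FractionalIdeal.mem_spanSingleton_self _ _)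
      (FractionalIdeal.mul_mem_mul (FractionalIdeal.mem_spanSingleton_self _ _) hz)
  have hmemV : ∀ z, z ∈ 𝔣⁻¹ →
      (plc m f)⁻¹ * ((plc m g)⁻¹ * z) ∈ 𝔤 * (I ⊓ J)⁻¹ := by
    intro z hz
    rw [hgs]
    exact FractionalIdeal.mul_mem_mul (FractionalIdeal.mem_spanSingleton_self _ _)
      (FractionalIdeal.mul_mem_mul (FractionalIdeal.mem_spanSingleton_self _ _) hz)
  -- monomial facts
  have hmin : ∀ i, mdeg m f i = 0 ∨ mdeg m g i = 0 := by
    intro i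
    have h := DFunLike.congr_fun hlmcop i
    rw [Finsupp.inf_apply] at h
    exact Nat.min_eq_zero_iff.mp h
  have hsup : mdeg m f ⊔ mdeg m g = mdeg m f + mdeg m g := by
    ext i
    rw [Finsupp.sup_apply, Finsupp.add_apply]
    rcases hmin i with h | h <;> simp [h]
  have hsep : ∀ du dv : Fin n →₀ ℕ, m.toSyn du < m.toSyn (mdeg m g) →
      m.toSyn dv < m.toSyn (mdeg m f) → du + mdeg m f ≠ dv + mdeg m g := by
    intro du dv hdu _ heq
    have hble : mdeg m g ≤ du := by
      rw [Finsupp.le_def]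
      intro i
      have h1 := DFunLike.congr_fun heq i
      rw [Finsupp.add_apply, Finsupp.add_apply] at h1
      rcases hmin i with h | h <;> omega
    exact absurd hdu (not_lt.mpr (m.toSyn_monotone hble))
  -- the spoly decomposition
  set U₀ : MvPolynomial (Fin n) (FractionRing R) :=
    MvPolynomial.C ((plc m f)⁻¹ * (plc m g)⁻¹) *
      (MvPolynomial.monomial (mdeg m g) (plc m g) - g) with hU₀def
  set V₀ : MvPolynomial (Fin n) (FractionRing R) :=
    MvPolynomial.C ((plc m f)⁻¹ * (plc m g)⁻¹) *
      (f - MvPolynomial.monomial (mdeg m f) (plc m f)) with hV₀def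
  have e1 : MvPolynomial.C ((plc m f)⁻¹ * (plc m g)⁻¹) *
      MvPolynomial.monomial (mdeg m g) (plc m g) =
      MvPolynomial.monomial (mdeg m g) ((plc m f)⁻¹ : FractionRing R) := by
    rw [MvPolynomial.C_mul_monomial]
    congr 1
    field_simp
  have e2 : MvPolynomial.C ((plc m f)⁻¹ * (plc m g)⁻¹) *
      MvPolynomial.monomial (mdeg m f) (plc m f) =
      MvPolynomial.monomial (mdeg m f) ((plc m g)⁻¹ : FractionRing R) := by
    rw [MvPolynomial.C_mul_monomial]
    congr 1
    field_simp
  have ht : monomial (mdeg m f ⊔ mdeg m g - mdeg m f) (plc m f)⁻¹ * f -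
      monomial (mdeg m f ⊔ mdeg m g - mdeg m g) (plc m g)⁻¹ * g = U₀ * f + V₀ * g := by
    rw [hsup, add_tsub_cancel_left, add_tsub_cancel_right, ← e1, ← e2, hU₀def, hV₀def]
    ring
  have hU₀c : ∀ d, U₀.coeff d ∈ 𝔣 * (I ⊓ J)⁻¹ := by
    intro d
    rw [hU₀def, MvPolynomial.coeff_C_mul, mul_assoc]
    apply hmemU
    rw [MvPolynomial.coeff_sub]
    refine FIsub_mem ?_ (hginv d)
    rw [MvPolynomial.coeff_monomial]
    split_ifs with h
    · exact hginv (mdeg m g)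
    · exact FIzero_mem _
  have hV₀c : ∀ d, V₀.coeff d ∈ 𝔤 * (I ⊓ J)⁻¹ := by
    intro d
    rw [hV₀def, MvPolynomial.coeff_C_mul, mul_assoc]
    apply hmemV
    rw [MvPolynomial.coeff_sub]
    refine FIsub_mem (hfinv d) ?_
    rw [MvPolynomial.coeff_monomial]
    split_ifs with h
    · exact hfinv (mdeg m f)
    · exact FIzero_mem _
  have hU₀d : ∀ d ∈ U₀.support, m.toSyn d < m.toSyn (mdeg m g) := by
    intro d hd
    rw [MvPolynomial.mem_support_iff, hU₀def, MvPolynomial.coeff_C_mul] at hd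
    have hne := right_ne_zero_of_mul hd
    rw [MvPolynomial.coeff_sub, MvPolynomial.coeff_monomial] at hne
    by_cases hdb : mdeg m g = d
    · exfalso
      apply hne
      rw [if_pos hdb, ← hdb, ← plc_def, sub_self]
    · have hgc : g.coeff d ≠ 0 := by
        rw [if_neg hdb, zero_sub] at hne
        exact fun h => hne (by rw [h, neg_zero])
      exact lt_of_le_of_ne (le_mdeg m hgc) (fun h => hdb (m.toSyn.injective h).symm)
  have hV₀d : ∀ d ∈ V₀.support, m.toSyn d < m.toSyn (mdeg m f) := by
    intro d hd
    rw [MvPolynomial.mem_support_iff, hV₀def, MvPolynomial.coeff_C_mul] at hd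
    have hne := right_ne_zero_of_mul hd
    rw [MvPolynomial.coeff_sub, MvPolynomial.coeff_monomial] at hne
    by_cases hdb : mdeg m f = d
    · exfalso
      apply hne
      rw [if_pos hdb, ← hdb, ← plc_def, sub_self]
    · have hfc : f.coeff d ≠ 0 := by
        rw [if_neg hdb, sub_zero] at hne
        exact hne
      exact lt_of_le_of_ne (le_mdeg m hfc) (fun h => hdb (m.toSyn.injective h).symm)
  rw [ht]
  exact key m f g 𝔣 𝔤 (I ⊓ J) hf hg hsep
    (U₀.support.card + V₀.support.card) U₀ V₀ le_rfl hU₀c hV₀c hU₀d hV₀d
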